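/- In a finite simple graph G on n vertices, the total number of ordered 2-paths equals Σ_v deg(v)·(deg(v) − 1), and this is at most n(n−1) + 16·t where t is the number of 4-cycles of G. -/

import Mathlib

/-- A 4-cycle in a graph, viewed as a set of 4 distinct vertices that can be
arranged in a cycle. -/
def IsFourCycle {V : Type*} [DecidableEq V] (G : SimpleGraph V) (s : Finset V) : Prop :=
  ∃ a b c d : V, a ≠ b ∧ a ≠ c ∧ a ≠ d ∧ b ≠ c ∧ b ≠ d ∧ c ≠ d ∧
    s = {a, b, c, d} ∧ G.Adj a b ∧ G.Adj b c ∧ G.Adj c d ∧ G.Adj d a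

open Finset

private lemma mul_sub_one_eq (m : ℕ) : m * (m - 1) = m * m - m := by
  cases m with
  | zero => rfl
  | succ k => rw [Nat.succ_sub_one, Nat.mul_succ, Nat.add_sub_cancel]

private lemma le_one_add_choose (x : ℕ) : x ≤ 1 + x.choose 2 := by
  match x with
  | 0 => simp
  | 1 => simp
  | (n+2) =>
    have h : (n+2).choose 2 = (n+1).choose 1 + (n+1).choose 2 :=
      Nat.choose_succ_succ _ _
    rw [Nat.choose_one_right] at h
    omega

section Main

variable {V : Type*} [Fintype V] [DecidableEq V] (G : SimpleGraph V) [DecidableRel G.Adj]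

private lemma offDiag_neighborFinset (w : V) :
    (G.neighborFinset w).offDiag
      = (Finset.univ : Finset V).offDiag.filter
          (fun q => G.Adj w q.1 ∧ G.Adj w q.2) := by
  ext q
  simp only [Finset.mem_offDiag, Finset.mem_filter, SimpleGraph.mem_neighborFinset,
    Finset.mem_univ, true_and]
  tauto

private lemma sum_deg_eq_sum_common :
    ∑ w : V, G.degree w * (G.degree w - 1)
      = ∑ q ∈ (Finset.univ : Finset V).offDiag,
          (G.neighborFinset q.1 ∩ G.neighborFinset q.2).card := by
  have h1 : ∀ w : V, G.degree w * (G.degree w - 1)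
      = (G.neighborFinset w).offDiag.card := by
    intro w
    rw [Finset.offDiag_card, G.card_neighborFinset_eq_degree, mul_sub_one_eq]
  calc ∑ w : V, G.degree w * (G.degree w - 1)
      = ∑ w : V, ∑ q ∈ (Finset.univ : Finset V).offDiag,
          (if G.Adj w q.1 ∧ G.Adj w q.2 then 1 else 0) := by
        refine Finset.sum_congr rfl fun w _ => ?_
        rw [h1 w, offDiag_neighborFinset, Finset.card_filter]
    _ = ∑ q ∈ (Finset.univ : Finset V).offDiag, ∑ w : V,
          (if G.Adj w q.1 ∧ G.Adj w q.2 then 1 else 0) := Finset.sum_comm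
    _ = ∑ q ∈ (Finset.univ : Finset V).offDiag,
          (G.neighborFinset q.1 ∩ G.neighborFinset q.2).card := by
        refine Finset.sum_congr rfl fun q _ => ?_
        rw [← Finset.card_filter]
        congr 1
        ext w
        simp [SimpleGraph.mem_neighborFinset, G.adj_comm]

private lemma part_one :
    Nat.card {p : V × V × V // p.1 ≠ p.2.2 ∧ G.Adj p.2.1 p.1 ∧ G.Adj p.2.1 p.2.2} =
      ∑ w : V, G.degree w * (G.degree w - 1) := by
  rw [Nat.card_eq_fintype_card, Fintype.card_subtype]
  have hb : (Finset.univ.filter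
        (fun p : V × V × V => p.1 ≠ p.2.2 ∧ G.Adj p.2.1 p.1 ∧ G.Adj p.2.1 p.2.2)).card
      = ((Finset.univ : Finset V).sigma
          (fun w => (G.neighborFinset w).offDiag)).card := by
    apply Finset.card_nbij' (fun p => ⟨p.2.1, (p.1, p.2.2)⟩)
      (fun x => (x.2.1, x.1, x.2.2))
    · intro p hp
      simp only [Finset.mem_coe, Finset.mem_filter, Finset.mem_univ, true_and] at hp
      simp only [Finset.mem_coe, Finset.mem_sigma, Finset.mem_univ, true_and, Finset.mem_offDiag,
        SimpleGraph.mem_neighborFinset]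
      exact ⟨hp.2.1, hp.2.2, hp.1⟩
    · intro x hx
      simp only [Finset.mem_coe, Finset.mem_sigma, Finset.mem_univ, true_and, Finset.mem_offDiag,
        SimpleGraph.mem_neighborFinset] at hx
      simp only [Finset.mem_coe, Finset.mem_filter, Finset.mem_univ, true_and]
      exact ⟨hx.2.2, hx.1, hx.2.1⟩
    · intro p _; rfl
    · intro x _; rfl
  rw [hb, Finset.card_sigma]
  refine Finset.sum_congr rfl fun w _ => ?_
  rw [Finset.offDiag_card, G.card_neighborFinset_eq_degree, mul_sub_one_eq]

private lemma sum_choose_le :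
    ∑ q ∈ (Finset.univ : Finset V).offDiag,
        ((G.neighborFinset q.1 ∩ G.neighborFinset q.2).card).choose 2
      ≤ 16 * Nat.card {s : Finset V // IsFourCycle G s} := by
  classical
  set S : Finset ((_ : V × V) × Finset V) :=
    (Finset.univ : Finset V).offDiag.sigma
      (fun q => (G.neighborFinset q.1 ∩ G.neighborFinset q.2).powersetCard 2) with hS
  set f : ((_ : V × V) × Finset V) → Finset V :=
    (fun x => insert x.1.1 (insert x.1.2 x.2)) with hf
  -- basic facts about elements of S
  have hmem : ∀ x ∈ S, x.1.1 ≠ x.1.2 ∧ x.2.card = 2 ∧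
      (∀ a ∈ x.2, G.Adj x.1.1 a ∧ G.Adj x.1.2 a) := by
    intro x hx
    simp only [hS, Finset.mem_sigma, Finset.mem_offDiag, Finset.mem_univ, true_and,
      Finset.mem_powersetCard] at hx
    refine ⟨hx.1, hx.2.2, fun a ha => ?_⟩
    have := hx.2.1 ha
    simp only [Finset.mem_inter, SimpleGraph.mem_neighborFinset] at this
    exact this
  have hnotmem : ∀ x ∈ S, x.1.1 ∉ x.2 ∧ x.1.2 ∉ x.2 := by
    intro x hx
    obtain ⟨_, _, h3⟩ := hmem x hx
    constructor
    · intro h; exact G.loopless.irrefl _ (h3 _ h).1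
    · intro h; exact G.loopless.irrefl _ (h3 _ h).2
  have hcard4 : ∀ x ∈ S, (f x).card ≤ 4 := by
    intro x hx
    obtain ⟨_, h2, _⟩ := hmem x hx
    calc (f x).card ≤ (insert x.1.2 x.2).card + 1 := Finset.card_insert_le _ _
      _ ≤ (x.2.card + 1) + 1 := by
          have := Finset.card_insert_le x.1.2 x.2; omega
      _ ≤ 4 := by omega
  -- the sum equals the cardinality of S
  have hsum : ∑ q ∈ (Finset.univ : Finset V).offDiag,
      ((G.neighborFinset q.1 ∩ G.neighborFinset q.2).card).choose 2 = S.card := by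
    rw [hS, Finset.card_sigma]
    exact Finset.sum_congr rfl fun q _ => (Finset.card_powersetCard 2 _).symm
  rw [hsum]
  -- image of f lies in four-cycles
  have himage : ∀ x ∈ S, IsFourCycle G (f x) := by
    rintro ⟨⟨u, v⟩, p⟩ hx
    obtain ⟨hne, h2, h3⟩ := hmem _ hx
    obtain ⟨w, w', hww', hp⟩ := Finset.card_eq_two.mp h2
    have hw : G.Adj u w ∧ G.Adj v w := h3 w (by rw [hp]; simp)
    have hw' : G.Adj u w' ∧ G.Adj v w' := h3 w' (by rw [hp]; simp)
    refine ⟨u, w, v, w', G.ne_of_adj hw.1, hne, G.ne_of_adj hw'.1,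
      (G.ne_of_adj hw.2).symm, hww', G.ne_of_adj hw'.2, ?_, hw.1,
      hw.2.symm, hw'.2, hw'.1.symm⟩
    show insert u (insert v p) = _
    have hp' : p = {w, w'} := hp
    rw [hp', Finset.insert_comm v w]
  -- counting fibers
  have hfib : ∀ b ∈ S.image f, (S.filter fun x => f x = b).card ≤ 16 := by
    intro b hb
    obtain ⟨x0, hx0, hfx0⟩ := Finset.mem_image.mp hb
    have hbcard : b.card ≤ 4 := hfx0 ▸ hcard4 x0 hx0
    have hinj : Set.InjOn (fun x : ((_ : V × V) × Finset V) => x.1)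
        ↑(S.filter fun x => f x = b) := by
      intro x hx y hy hxy
      simp only [Finset.coe_filter, Set.mem_setOf_eq] at hx hy
      obtain ⟨hxS, hxb⟩ := hx
      obtain ⟨hyS, hyb⟩ := hy
      have hrec : ∀ z ∈ S, f z = b → z.2 = b \ {z.1.1, z.1.2} := by
        intro z hzS hzb
        obtain ⟨hz1, hz2⟩ := hnotmem z hzS
        rw [← hzb]
        ext a
        simp only [hf, Finset.mem_sdiff, Finset.mem_insert, Finset.mem_singleton,
          not_or]
        constructor
        · intro ha; exact ⟨Or.inr (Or.inr ha),
            fun h => by subst h; exact hz1 ha, fun h => by subst h; exact hz2 ha⟩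
        · rintro ⟨h1 | h1 | h1, h2, h3⟩
          · exact absurd h1 h2
          · exact absurd h1 h3
          · exact h1
      have hxy' : x.1 = y.1 := hxy
      have h2 : x.2 = y.2 := by
        rw [hrec x hxS hxb, hrec y hyS hyb, hxy']
      exact Sigma.ext hxy' (heq_of_eq h2)
    have hsub : (S.filter fun x => f x = b).image (fun x => x.1) ⊆ b ×ˢ b := by
      intro q hq
      obtain ⟨x, hx, hq⟩ := Finset.mem_image.mp hq
      simp only [Finset.mem_filter] at hx
      subst hq
      have h1 : x.1.1 ∈ b := by rw [← hx.2]; simp [hf]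
      have h2 : x.1.2 ∈ b := by rw [← hx.2]; simp [hf]
      exact Finset.mem_product.mpr ⟨h1, h2⟩
    calc (S.filter fun x => f x = b).card
        = ((S.filter fun x => f x = b).image (fun x => x.1)).card :=
          (Finset.card_image_of_injOn hinj).symm
      _ ≤ (b ×ˢ b).card := Finset.card_le_card hsub
      _ = b.card * b.card := Finset.card_product b b
      _ ≤ 16 := Nat.mul_le_mul hbcard hbcard |>.trans (by norm_num)
  have hmain : S.card ≤ 16 * (S.image f).card :=
    Finset.card_le_mul_card_image S 16 hfib
  have himcard : (S.image f).card ≤ Nat.card {s : Finset V // IsFourCycle G s} := by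
    rw [Nat.card_eq_fintype_card, Fintype.card_subtype]
    apply Finset.card_le_card
    intro b hb
    obtain ⟨x, hx, hfx⟩ := Finset.mem_image.mp hb
    simp only [Finset.mem_filter, Finset.mem_univ, true_and]
    exact hfx ▸ himage x hx
  calc S.card ≤ 16 * (S.image f).card := hmain
    _ ≤ 16 * Nat.card {s : Finset V // IsFourCycle G s} :=
        Nat.mul_le_mul_left 16 himcard

end Main

/-- The number of ordered 2-paths `(u, w, v)` (with `u ≠ v` and `w` adjacent to both)
equals `Σ_w deg(w)·(deg(w) − 1)`, and is at most `n(n−1) + 16·t` where `t` is the number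
of 4-cycles. -/
theorem ordered_two_paths_eq_and_le {V : Type*} [Fintype V] [DecidableEq V]
    (G : SimpleGraph V) [DecidableRel G.Adj] :
    Nat.card {p : V × V × V // p.1 ≠ p.2.2 ∧ G.Adj p.2.1 p.1 ∧ G.Adj p.2.1 p.2.2} =
        ∑ w : V, G.degree w * (G.degree w - 1) ∧
      ∑ w : V, G.degree w * (G.degree w - 1) ≤
        Fintype.card V * (Fintype.card V - 1) +
          16 * Nat.card {s : Finset V // IsFourCycle G s} := by
  refine ⟨part_one G, ?_⟩
  rw [sum_deg_eq_sum_common G]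
  calc ∑ q ∈ (Finset.univ : Finset V).offDiag,
        (G.neighborFinset q.1 ∩ G.neighborFinset q.2).card
      ≤ ∑ q ∈ (Finset.univ : Finset V).offDiag,
        (1 + ((G.neighborFinset q.1 ∩ G.neighborFinset q.2).card).choose 2) :=
        Finset.sum_le_sum fun q _ => le_one_add_choose _
    _ = (Finset.univ : Finset V).offDiag.card +
        ∑ q ∈ (Finset.univ : Finset V).offDiag,
          ((G.neighborFinset q.1 ∩ G.neighborFinset q.2).card).choose 2 := by
        rw [Finset.sum_add_distrib, Finset.sum_const, smul_eq_mul, mul_one]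
    _ ≤ Fintype.card V * (Fintype.card V - 1) +
        16 * Nat.card {s : Finset V // IsFourCycle G s} := by
        apply Nat.add_le_add
        · rw [Finset.offDiag_card, Finset.card_univ]
          rw [mul_sub_one_eq]
        · exact sum_choose_le G
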